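/- Let X, Y be independent exponential random variables with rate γ. Then conditionally on X+Y < p, the variable σ = 2 min(X,Y)/(X+Y) is uniformly distributed on [0,1]: for all 0 ≤ ε ≤ 1, P(σ ≤ ε | X+Y < p) = ε. -/

import Mathlib

set_option maxHeartbeats 1000000

open MeasureTheory ProbabilityTheory Real Set

namespace CondShape

variable {γ : ℝ}

lemma expMeasure_eq (γ : ℝ) :
    expMeasure γ = volume.withDensity (exponentialPDF γ) := rfl

lemma expMeasure_Iic (hγ : 0 < γ) (t : ℝ) :
    expMeasure γ (Iic t) = ENNReal.ofReal (1 - exp (-(γ * t))) := by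
  rw [expMeasure_eq, withDensity_apply _ measurableSet_Iic,
    lintegral_exponentialPDF_eq_antiDeriv hγ]
  split_ifs with h
  · rfl
  · push_neg at h
    rw [ENNReal.ofReal_zero]
    symm
    apply ENNReal.ofReal_eq_zero.2
    have : (1:ℝ) ≤ exp (-(γ * t)) := by
      rw [← Real.exp_zero]
      apply Real.exp_le_exp.2
      nlinarith
    linarith

lemma expMeasure_singleton (hγ : 0 < γ) (t : ℝ) : expMeasure γ {t} = 0 := by
  rw [expMeasure_eq, withDensity_apply _ (measurableSet_singleton t)]
  rw [setLIntegral_measure_zero _ _ (measure_singleton t)]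

lemma expMeasure_Iio (hγ : 0 < γ) (t : ℝ) :
    expMeasure γ (Iio t) = ENNReal.ofReal (1 - exp (-(γ * t))) := by
  have hU : Iio t ∪ {t} = Iic t := by
    ext x; simp [le_iff_lt_or_eq]
  have : expMeasure γ (Iic t) = expMeasure γ (Iio t) + expMeasure γ {t} := by
    rw [← measure_union (by simp) (measurableSet_singleton t), hU]
  rw [expMeasure_singleton hγ, add_zero] at this
  rw [← this, expMeasure_Iic hγ]

lemma expMeasure_Ioo (hγ : 0 < γ) {u : ℝ} (hu : 0 ≤ u) (v : ℝ) :
    expMeasure γ (Ioo u v) = ENNReal.ofReal (exp (-(γ * u)) - exp (-(γ * v))) := by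
  rcases le_or_gt v u with h | h
  · rw [Ioo_eq_empty (by exact not_lt.2 h), measure_empty]
    symm
    rw [ENNReal.ofReal_eq_zero]
    have := Real.exp_le_exp.2 (show -(γ*u) ≤ -(γ*v) by nlinarith)
    linarith
  · have hsplit : Iio v = Iic u ∪ Ioo u v := by
      rw [Iic_union_Ioo_eq_Iio h]
    have hd : Disjoint (Iic u) (Ioo u v) := by
      apply Set.disjoint_left.2
      rintro x (hx : x ≤ u) ⟨h1, h2⟩
      exact absurd h1 (not_lt.2 hx)
    have := measure_union (μ := expMeasure γ) hd (measurableSet_Ioo (a := u) (b := v))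
    rw [← hsplit] at this
    rw [expMeasure_Iio hγ, expMeasure_Iic hγ] at this
    have h1 : (0:ℝ) ≤ 1 - exp (-(γ * u)) := by
      have : exp (-(γ*u)) ≤ 1 := by
        rw [← Real.exp_zero]; apply Real.exp_le_exp.2; nlinarith
      linarith
    have h2 : (0:ℝ) ≤ exp (-(γ * u)) - exp (-(γ * v)) :=
      sub_nonneg.2 (Real.exp_le_exp.2 (by nlinarith))
    have key : (1 - exp (-(γ * v))) = (1 - exp (-(γ * u))) + (exp (-(γ * u)) - exp (-(γ * v))) := by ring
    rw [key, ENNReal.ofReal_add h1 h2] at this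
    exact ((ENNReal.add_right_inj ENNReal.ofReal_ne_top).1 this).symm

lemma cont_exp_neg_mul (c k : ℝ) : Continuous fun x : ℝ => c * exp (-(k * x)) :=
  continuous_const.mul (Real.continuous_exp.comp ((continuous_const.mul continuous_id).neg))

lemma integral_exp_neg_mul {k : ℝ} (hk : 0 < k) (u v : ℝ) :
    ∫ x in u..v, exp (-(k * x)) = (exp (-(k * u)) - exp (-(k * v))) / k := by
  have h : ∀ x ∈ Set.uIcc u v, HasDerivAt (fun a ↦ -exp (-(k * a)) / k)
      (exp (-(k * x))) x := by
    intro x _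
    have h1 : HasDerivAt (fun a ↦ -(k * a)) (-k) x := by
      simpa using ((hasDerivAt_id x).const_mul (-k))
    have := (h1.exp.neg).div_const k
    exact this.congr_deriv (by rw [div_eq_iff hk.ne']; ring)
  rw [intervalIntegral.integral_eq_sub_of_hasDerivAt h]
  · field_simp
    ring
  · exact ((cont_exp_neg_mul 1 k).congr (by intro x; simp)).intervalIntegrable _ _

lemma prod_section (hγ : 0 < γ) {S : Set (ℝ × ℝ)} (hS : MeasurableSet S) :
    (expMeasure γ).prod (expMeasure γ) S =
      ∫⁻ x in Ioi (0:ℝ), ENNReal.ofReal (γ * exp (-(γ * x))) *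
        (expMeasure γ) (Prod.mk x ⁻¹' S) ∂volume := by
  haveI := isProbabilityMeasure_expMeasure hγ
  rw [Measure.prod_apply hS]
  conv_lhs => rw [expMeasure_eq]
  rw [lintegral_withDensity_eq_lintegral_mul _ (show Measurable (exponentialPDF γ) from (measurable_exponentialPDFReal γ).ennreal_ofReal)
    (measurable_measure_prodMk_left hS)]
  rw [← lintegral_indicator measurableSet_Ioi]
  apply lintegral_congr_ae
  filter_upwards [compl_mem_ae_iff.2 (show volume ({(0:ℝ)} : Set ℝ) = 0 from measure_singleton 0)] with x hx
  simp only [Set.indicator, Set.mem_Ioi, Pi.mul_apply]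
  split_ifs with h
  · rw [exponentialPDF_of_nonneg h.le]; rfl
  · have hx0 : x < 0 := by
      rcases lt_or_eq_of_le (not_lt.1 h) with h' | h'
      · exact h'
      · exact absurd h' (by simpa [eq_comm] using hx)
    rw [exponentialPDF_of_neg hx0, zero_mul]

lemma measurableSet_B (p : ℝ) : MeasurableSet {q : ℝ × ℝ | q.1 + q.2 < p} :=
  measurableSet_lt (measurable_fst.add measurable_snd) measurable_const

lemma prodB (hγ : 0 < γ) {p : ℝ} (hp : 0 < p) :
    (expMeasure γ).prod (expMeasure γ) {q : ℝ × ℝ | q.1 + q.2 < p} =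
      ENNReal.ofReal (1 - (1 + γ * p) * exp (-(γ * p))) := by
  rw [prod_section hγ (measurableSet_B p)]
  have hsec : ∀ x : ℝ, (Prod.mk x ⁻¹' {q : ℝ × ℝ | q.1 + q.2 < p}) = Iio (p - x) := by
    intro x
    ext y
    simp only [Set.mem_preimage, Set.mem_setOf_eq, Set.mem_Iio]
    constructor <;> intro <;> linarith
  have hstep : ∫⁻ x in Ioi (0:ℝ), ENNReal.ofReal (γ * exp (-(γ * x))) *
      (expMeasure γ) (Prod.mk x ⁻¹' {q : ℝ × ℝ | q.1 + q.2 < p}) ∂volume =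
      ∫⁻ x in Ioi (0:ℝ), ENNReal.ofReal (γ * exp (-(γ * x))) *
      ENNReal.ofReal (1 - exp (-(γ * (p - x)))) ∂volume := by
    apply lintegral_congr
    intro x
    rw [hsec x, expMeasure_Iio hγ]
  rw [hstep, ← Ioc_union_Ioi_eq_Ioi hp.le,
    lintegral_union measurableSet_Ioi (Set.Ioc_disjoint_Ioi le_rfl)]
  have htail : ∫⁻ x in Ioi p, ENNReal.ofReal (γ * exp (-(γ * x))) *
      ENNReal.ofReal (1 - exp (-(γ * (p - x)))) ∂volume = 0 := by
    rw [setLIntegral_congr_fun_ae measurableSet_Ioi (ae_of_all _ (fun x (hx : p < x) => ?_)),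
      lintegral_zero]
    have h1 : (1:ℝ) ≤ exp (-(γ * (p - x))) := by
      rw [← Real.exp_zero]
      apply Real.exp_le_exp.2
      nlinarith
    have hz : ENNReal.ofReal (1 - exp (-(γ * (p - x)))) = 0 :=
      ENNReal.ofReal_eq_zero.2 (by linarith)
    rw [hz, mul_zero]
  rw [htail, add_zero]
  have hmain : ∫⁻ x in Ioc 0 p, ENNReal.ofReal (γ * exp (-(γ * x))) *
      ENNReal.ofReal (1 - exp (-(γ * (p - x)))) ∂volume =
      ∫⁻ x in Ioc 0 p, ENNReal.ofReal (γ * exp (-(γ * x)) - γ * exp (-(γ * p))) ∂volume := by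
    apply setLIntegral_congr_fun_ae measurableSet_Ioc
    apply ae_of_all
    intro x hx
    rw [← ENNReal.ofReal_mul (by positivity)]
    congr 1
    have h2 : exp (-(γ * x)) * exp (-(γ * (p - x))) = exp (-(γ * p)) := by
      rw [← Real.exp_add]; ring_nf
    linear_combination (-γ) * h2
  rw [hmain, ← ofReal_integral_eq_lintegral_ofReal]
  · rw [← intervalIntegral.integral_of_le hp.le,
      intervalIntegral.integral_sub ((cont_exp_neg_mul γ γ).intervalIntegrable _ _)
        (continuous_const.intervalIntegrable _ _),
      intervalIntegral.integral_const_mul, integral_exp_neg_mul hγ,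
      intervalIntegral.integral_const]
    congr 1
    rw [mul_zero, neg_zero, Real.exp_zero]
    field_simp
    ring
  · exact ((cont_exp_neg_mul γ γ).sub continuous_const).integrableOn_Ioc
  · apply (ae_restrict_iff' measurableSet_Ioc).2
    apply ae_of_all
    intro x hx
    show (0:ℝ) ≤ γ * exp (-(γ * x)) - γ * exp (-(γ * p))
    have h3 : exp (-(γ * p)) ≤ exp (-(γ * x)) := Real.exp_le_exp.2 (by nlinarith [hx.2])
    nlinarith

lemma measurableSet_A (ε : ℝ) :
    MeasurableSet {q : ℝ × ℝ | 2 * min q.1 q.2 / (q.1 + q.2) ≤ ε} := by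
  apply measurableSet_le _ measurable_const
  exact ((measurable_fst.min measurable_snd).const_mul 2).div
    (measurable_fst.add measurable_snd)

lemma section_eq (hγ : 0 < γ) {p ε x : ℝ} (hp : 0 < p) (hε : 0 < ε) (hε1 : ε ≤ 1)
    (hx : 0 < x) :
    (expMeasure γ) (Prod.mk x ⁻¹'
        ({q : ℝ × ℝ | q.1 + q.2 < p} \ {q | 2 * min q.1 q.2 / (q.1 + q.2) ≤ ε})) =
      ENNReal.ofReal (exp (-(γ * (ε / (2 - ε) * x))) -
        exp (-(γ * min (x * (2 - ε) / ε) (p - x)))) := by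
  have h2ε : 0 < 2 - ε := by linarith
  set T := Prod.mk x ⁻¹'
      ({q : ℝ × ℝ | q.1 + q.2 < p} \ {q | 2 * min q.1 q.2 / (q.1 + q.2) ≤ ε}) with hT
  have hkey : T ∩ Ioi 0 = Ioo (ε / (2 - ε) * x) (min (x * (2 - ε) / ε) (p - x)) := by
    ext y
    simp only [hT, Set.mem_inter_iff, Set.mem_preimage, Set.mem_diff, Set.mem_setOf_eq,
      Set.mem_Ioi, Set.mem_Ioo, lt_min_iff, not_le]
    constructor
    · rintro ⟨⟨hsum, hcond⟩, hy⟩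
      have hxy : 0 < x + y := by linarith
      have hmin : ε * (x + y) < 2 * min x y := (lt_div_iff₀ hxy).1 hcond
      have hm1 := min_le_left x y
      have hm2 := min_le_right x y
      refine ⟨?_, ?_, by linarith⟩
      · rw [div_mul_eq_mul_div, div_lt_iff₀ h2ε]
        nlinarith
      · rw [lt_div_iff₀ hε]
        nlinarith
    · rintro ⟨h1, h2, h3⟩
      have hy : 0 < y := lt_trans (by positivity) h1
      have hxy : 0 < x + y := by linarith
      refine ⟨⟨by linarith, ?_⟩, hy⟩
      rw [lt_div_iff₀ hxy]
      rw [div_mul_eq_mul_div, div_lt_iff₀ h2ε] at h1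
      rw [lt_div_iff₀ hε] at h2
      rcases min_cases x y with ⟨hm, _⟩ | ⟨hm, _⟩ <;> rw [hm] <;> nlinarith
  have hnull : (expMeasure γ) (T ∩ Iic 0) = 0 := by
    apply le_antisymm _ zero_le
    calc (expMeasure γ) (T ∩ Iic 0) ≤ (expMeasure γ) (Iic 0) :=
          measure_mono Set.inter_subset_right
      _ = 0 := by rw [expMeasure_Iic hγ]; simp
  have hsplit : (expMeasure γ) T = (expMeasure γ) (T ∩ Ioi 0) := by
    apply le_antisymm
    · calc (expMeasure γ) T = (expMeasure γ) ((T ∩ Ioi 0) ∪ (T ∩ Iic 0)) := by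
            rw [← Set.inter_union_distrib_left, (by ext z; simp : Ioi (0:ℝ) ∪ Iic 0 = Set.univ), Set.inter_univ]
        _ ≤ (expMeasure γ) (T ∩ Ioi 0) + (expMeasure γ) (T ∩ Iic 0) := measure_union_le _ _
        _ = (expMeasure γ) (T ∩ Ioi 0) := by rw [hnull, add_zero]
    · exact measure_mono Set.inter_subset_left
  rw [hsplit, hkey, expMeasure_Ioo hγ (by positivity)]

lemma prodBC (hγ : 0 < γ) {p ε : ℝ} (hp : 0 < p) (hε : 0 < ε) (hε1 : ε ≤ 1) :
    (expMeasure γ).prod (expMeasure γ)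
      ({q : ℝ × ℝ | q.1 + q.2 < p} \ {q | 2 * min q.1 q.2 / (q.1 + q.2) ≤ ε}) =
      ENNReal.ofReal ((1 - ε) * (1 - (1 + γ * p) * exp (-(γ * p)))) := by
  have h2ε : 0 < 2 - ε := by linarith
  set a := p * ε / 2 with ha
  set b := p * (2 - ε) / 2 with hb
  set k1 := 2 * γ / (2 - ε) with hk1
  set k2 := 2 * γ / ε with hk2
  have ha0 : 0 < a := by positivity
  have hab : a ≤ b := by
    rw [ha, hb]
    nlinarith
  have hk10 : 0 < k1 := by positivity
  have hk20 : 0 < k2 := by positivity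
  rw [prod_section hγ ((measurableSet_B p).diff (measurableSet_A ε))]
  rw [setLIntegral_congr_fun_ae measurableSet_Ioi (ae_of_all _
    (fun x (hx : (0:ℝ) < x) => by rw [section_eq hγ hp hε hε1 hx]))]
  rw [← Set.Ioc_union_Ioi_eq_Ioi (le_trans ha0.le hab),
    lintegral_union measurableSet_Ioi (Set.Ioc_disjoint_Ioi le_rfl)]
  have htail : ∫⁻ x in Ioi b, ENNReal.ofReal (γ * exp (-(γ * x))) *
      ENNReal.ofReal (exp (-(γ * (ε / (2 - ε) * x))) -
        exp (-(γ * min (x * (2 - ε) / ε) (p - x)))) ∂volume = 0 := by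
    rw [setLIntegral_congr_fun_ae measurableSet_Ioi (ae_of_all _
      (fun x (hx : b < x) => ?_)), lintegral_zero]
    have hmle : min (x * (2 - ε) / ε) (p - x) ≤ ε / (2 - ε) * x := by
      apply le_trans (min_le_right _ _)
      rw [div_mul_eq_mul_div, le_div_iff₀ h2ε]
      rw [hb] at hx
      nlinarith
    have hz : ENNReal.ofReal (exp (-(γ * (ε / (2 - ε) * x))) -
        exp (-(γ * min (x * (2 - ε) / ε) (p - x)))) = 0 := by
      apply ENNReal.ofReal_eq_zero.2
      have := Real.exp_le_exp.2 (show -(γ * (ε / (2 - ε) * x)) ≤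
        -(γ * min (x * (2 - ε) / ε) (p - x)) by nlinarith)
      linarith
    rw [hz, mul_zero]
  rw [htail, add_zero, ← Set.Ioc_union_Ioc_eq_Ioc ha0.le hab,
    lintegral_union measurableSet_Ioc
      (Set.disjoint_left.2 (fun x hx1 hx2 => absurd hx2.1 (not_lt.2 hx1.2)))]
  have hpiece1 : ∫⁻ x in Ioc 0 a, ENNReal.ofReal (γ * exp (-(γ * x))) *
      ENNReal.ofReal (exp (-(γ * (ε / (2 - ε) * x))) -
        exp (-(γ * min (x * (2 - ε) / ε) (p - x)))) ∂volume =
      ENNReal.ofReal (∫ x in (0:ℝ)..a, (γ * exp (-(k1 * x)) - γ * exp (-(k2 * x)))) := by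
    rw [setLIntegral_congr_fun_ae measurableSet_Ioc (ae_of_all _
      (fun x (hx : x ∈ Ioc (0:ℝ) a) => ?_))]
    · rw [← ofReal_integral_eq_lintegral_ofReal, intervalIntegral.integral_of_le ha0.le]
      · exact ((cont_exp_neg_mul γ k1).sub (cont_exp_neg_mul γ k2)).integrableOn_Ioc
      · apply (ae_restrict_iff' measurableSet_Ioc).2
        apply ae_of_all
        intro x hx
        show (0:ℝ) ≤ γ * exp (-(k1 * x)) - γ * exp (-(k2 * x))
        have h3 : exp (-(k2 * x)) ≤ exp (-(k1 * x)) := by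
          apply Real.exp_le_exp.2
          have : k1 ≤ k2 := by
            rw [hk1, hk2]
            apply div_le_div_of_nonneg_left (by linarith) hε (by linarith)
          nlinarith [hx.1]
        nlinarith
    · have hmin : min (x * (2 - ε) / ε) (p - x) = x * (2 - ε) / ε := by
        apply min_eq_left
        rw [div_le_iff₀ hε]
        rw [ha] at hx
        nlinarith [hx.2]
      rw [hmin, ← ENNReal.ofReal_mul (by positivity)]
      congr 1
      have eA : exp (-(γ * x)) * exp (-(γ * (ε / (2 - ε) * x))) = exp (-(k1 * x)) := by
        rw [← Real.exp_add]
        congr 1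
        rw [hk1]
        field_simp
        ring
      have eB : exp (-(γ * x)) * exp (-(γ * (x * (2 - ε) / ε))) = exp (-(k2 * x)) := by
        rw [← Real.exp_add]
        congr 1
        rw [hk2]
        field_simp
        ring
      linear_combination γ * eA - γ * eB
  have hpiece2 : ∫⁻ x in Ioc a b, ENNReal.ofReal (γ * exp (-(γ * x))) *
      ENNReal.ofReal (exp (-(γ * (ε / (2 - ε) * x))) -
        exp (-(γ * min (x * (2 - ε) / ε) (p - x)))) ∂volume =
      ENNReal.ofReal (∫ x in a..b, (γ * exp (-(k1 * x)) - γ * exp (-(γ * p)))) := by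
    rw [setLIntegral_congr_fun_ae measurableSet_Ioc (ae_of_all _
      (fun x (hx : x ∈ Ioc a b) => ?_))]
    · rw [← ofReal_integral_eq_lintegral_ofReal, intervalIntegral.integral_of_le hab]
      · exact ((cont_exp_neg_mul γ k1).sub continuous_const).integrableOn_Ioc
      · apply (ae_restrict_iff' measurableSet_Ioc).2
        apply ae_of_all
        intro x hx
        show (0:ℝ) ≤ γ * exp (-(k1 * x)) - γ * exp (-(γ * p))
        have h3 : exp (-(γ * p)) ≤ exp (-(k1 * x)) := by
          apply Real.exp_le_exp.2
          have h4 : k1 * x ≤ k1 * b := mul_le_mul_of_nonneg_left hx.2 hk10.le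
          have heq : k1 * b = γ * p := by
            rw [hk1, hb]; field_simp
          linarith
        nlinarith
    · have hmin : min (x * (2 - ε) / ε) (p - x) = p - x := by
        apply min_eq_right
        rw [le_div_iff₀ hε]
        rw [ha] at hx
        nlinarith [hx.1]
      rw [hmin, ← ENNReal.ofReal_mul (by positivity)]
      congr 1
      have eA : exp (-(γ * x)) * exp (-(γ * (ε / (2 - ε) * x))) = exp (-(k1 * x)) := by
        rw [← Real.exp_add]
        congr 1
        rw [hk1]
        field_simp
        ring
      have eB : exp (-(γ * x)) * exp (-(γ * (p - x))) = exp (-(γ * p)) := by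
        rw [← Real.exp_add]
        ring_nf
      linear_combination γ * eA - γ * eB
  rw [hpiece1, hpiece2]
  have hI1 : (0:ℝ) ≤ ∫ x in (0:ℝ)..a, (γ * exp (-(k1 * x)) - γ * exp (-(k2 * x))) := by
    apply intervalIntegral.integral_nonneg ha0.le
    intro x hx
    have h3 : exp (-(k2 * x)) ≤ exp (-(k1 * x)) := by
      apply Real.exp_le_exp.2
      have : k1 ≤ k2 := by
        rw [hk1, hk2]
        apply div_le_div_of_nonneg_left (by linarith) hε (by linarith)
      nlinarith [hx.1]
    nlinarith
  have hI2 : (0:ℝ) ≤ ∫ x in a..b, (γ * exp (-(k1 * x)) - γ * exp (-(γ * p))) := by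
    apply intervalIntegral.integral_nonneg hab
    intro x hx
    have h3 : exp (-(γ * p)) ≤ exp (-(k1 * x)) := by
      apply Real.exp_le_exp.2
      have hxb : x ≤ b := hx.2
      have : k1 * x ≤ k1 * b := mul_le_mul_of_nonneg_left hxb hk10.le
      have heq : k1 * b = γ * p := by
        rw [hk1, hb]
        field_simp
      linarith
    nlinarith
  rw [← ENNReal.ofReal_add hI1 hI2]
  congr 1
  have hc1 : Continuous fun x : ℝ => γ * exp (-(k1 * x)) := cont_exp_neg_mul γ k1
  have hc2 : Continuous fun x : ℝ => γ * exp (-(k2 * x)) := cont_exp_neg_mul γ k2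
  rw [intervalIntegral.integral_sub (hc1.intervalIntegrable _ _) (hc2.intervalIntegrable _ _),
    intervalIntegral.integral_sub (hc1.intervalIntegrable _ _)
      (show IntervalIntegrable (fun _ : ℝ => γ * exp (-(γ * p))) volume a b from (continuous_const.mul continuous_const).intervalIntegrable _ _),
    intervalIntegral.integral_const_mul, intervalIntegral.integral_const_mul,
    intervalIntegral.integral_const_mul,
    integral_exp_neg_mul hk10, integral_exp_neg_mul hk20, integral_exp_neg_mul hk10,
    intervalIntegral.integral_const]
  have e1 : -(k1 * 0) = 0 := by ring
  have e2 : -(k2 * 0) = 0 := by ring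
  have e3 : -(k2 * a) = -(γ * p) := by rw [hk2, ha]; field_simp
  have e4 : -(k1 * b) = -(γ * p) := by rw [hk1, hb]; field_simp
  rw [e1, e2, e3, e4, Real.exp_zero]
  rw [hk1, hk2, ha, hb]
  field_simp
  ring

end CondShape

open CondShape in
theorem cond_shape_uniform_cdf
    {Ω : Type*} [MeasurableSpace Ω] (μ : Measure Ω) [IsProbabilityMeasure μ]
    (γ : ℝ) (hγ : 0 < γ) (X Y : Ω → ℝ)
    (hX : Measurable X) (hY : Measurable Y)
    (hXd : μ.map X = expMeasure γ) (hYd : μ.map Y = expMeasure γ)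
    (hind : IndepFun X Y μ) (p : ℝ) (hp : 0 < p) :
    ∀ ε : ℝ, 0 ≤ ε → ε ≤ 1 →
      (μ[|{ω | X ω + Y ω < p}]) {ω | 2 * min (X ω) (Y ω) / (X ω + Y ω) ≤ ε} =
        ENNReal.ofReal ε := by
  intro ε hε0 hε1
  have hmXY : Measurable fun ω => (X ω, Y ω) := hX.prodMk hY
  have hmapXY := (indepFun_iff_map_prod_eq_prod_map_map hX.aemeasurable hY.aemeasurable).1 hind
  rw [hXd, hYd] at hmapXY
  have hpre : ∀ {S : Set (ℝ × ℝ)}, MeasurableSet S →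
      μ ((fun ω => (X ω, Y ω)) ⁻¹' S) = (expMeasure γ).prod (expMeasure γ) S := by
    intro S hS
    rw [← hmapXY, Measure.map_apply hmXY hS]
  have hBset : {ω | X ω + Y ω < p} =
      (fun ω => (X ω, Y ω)) ⁻¹' {q : ℝ × ℝ | q.1 + q.2 < p} := rfl
  have hAset : {ω | 2 * min (X ω) (Y ω) / (X ω + Y ω) ≤ ε} =
      (fun ω => (X ω, Y ω)) ⁻¹' {q : ℝ × ℝ | 2 * min q.1 q.2 / (q.1 + q.2) ≤ ε} := rfl
  have hBmeas : MeasurableSet {ω | X ω + Y ω < p} := by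
    rw [hBset]; exact hmXY (measurableSet_B p)
  set K := 1 - (1 + γ * p) * exp (-(γ * p)) with hKdef
  have hK : 0 < K := by
    have h1 := Real.add_one_lt_exp (ne_of_gt (mul_pos hγ hp))
    have h2 : exp (γ * p) * exp (-(γ * p)) = 1 := by
      rw [← Real.exp_add]; simp
    nlinarith [Real.exp_pos (-(γ * p))]
  have hμB : μ {ω | X ω + Y ω < p} = ENNReal.ofReal K := by
    rw [hBset, hpre (measurableSet_B p), prodB hγ hp]
  rw [cond_apply hBmeas, hμB]
  rcases eq_or_lt_of_le hε0 with hε | hε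
  · -- ε = 0
    subst hε
    have hsub : {ω | X ω + Y ω < p} ∩ {ω | 2 * min (X ω) (Y ω) / (X ω + Y ω) ≤ 0} ⊆
        {ω | X ω ≤ 0} ∪ {ω | Y ω ≤ 0} := by
      intro ω ⟨h1, h2⟩
      by_contra h
      simp only [Set.mem_union, Set.mem_setOf_eq, not_or, not_le] at h
      have hX0 : 0 < X ω := h.1
      have hY0 : 0 < Y ω := h.2
      have : 0 < 2 * min (X ω) (Y ω) / (X ω + Y ω) := by
        apply div_pos _ (by linarith)
        have := lt_min hX0 hY0
        linarith
      exact absurd h2 (not_le.2 this)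
    have hz : μ ({ω | X ω + Y ω < p} ∩
        {ω | 2 * min (X ω) (Y ω) / (X ω + Y ω) ≤ 0}) = 0 := by
      apply le_antisymm _ zero_le
      calc μ _ ≤ μ ({ω | X ω ≤ 0} ∪ {ω | Y ω ≤ 0}) := measure_mono hsub
        _ ≤ μ {ω | X ω ≤ 0} + μ {ω | Y ω ≤ 0} := measure_union_le _ _
        _ = 0 := by
            have e1 : μ {ω | X ω ≤ 0} = 0 := by
              have : {ω | X ω ≤ 0} = X ⁻¹' (Set.Iic 0) := rfl
              rw [this, ← Measure.map_apply hX measurableSet_Iic, hXd,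
                expMeasure_Iic hγ]
              simp
            have e2 : μ {ω | Y ω ≤ 0} = 0 := by
              have : {ω | Y ω ≤ 0} = Y ⁻¹' (Set.Iic 0) := rfl
              rw [this, ← Measure.map_apply hY measurableSet_Iic, hYd,
                expMeasure_Iic hγ]
              simp
            rw [e1, e2, add_zero]
    rw [hz, mul_zero, ENNReal.ofReal_zero]
  · -- 0 < ε
    have hAmeas : MeasurableSet {ω | 2 * min (X ω) (Y ω) / (X ω + Y ω) ≤ ε} := by
      rw [hAset]; exact hmXY (measurableSet_A ε)
    have hdiff : μ ({ω | X ω + Y ω < p} \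
        {ω | 2 * min (X ω) (Y ω) / (X ω + Y ω) ≤ ε}) =
        ENNReal.ofReal ((1 - ε) * K) := by
      have : {ω | X ω + Y ω < p} \ {ω | 2 * min (X ω) (Y ω) / (X ω + Y ω) ≤ ε} =
          (fun ω => (X ω, Y ω)) ⁻¹' ({q : ℝ × ℝ | q.1 + q.2 < p} \
            {q | 2 * min q.1 q.2 / (q.1 + q.2) ≤ ε}) := by
        rw [Set.preimage_diff, ← hBset, ← hAset]
      rw [this, hpre ((measurableSet_B p).diff (measurableSet_A ε)), prodBC hγ hp hε hε1]
    have hinter : μ ({ω | X ω + Y ω < p} ∩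
        {ω | 2 * min (X ω) (Y ω) / (X ω + Y ω) ≤ ε}) = ENNReal.ofReal (ε * K) := by
      have hsum := measure_inter_add_diff {ω | X ω + Y ω < p} hAmeas (μ := μ)
      rw [hdiff, hμB] at hsum
      have hsplit : ENNReal.ofReal K = ENNReal.ofReal (ε * K) +
          ENNReal.ofReal ((1 - ε) * K) := by
        rw [← ENNReal.ofReal_add (by positivity) (by nlinarith)]
        congr 1
        ring
      rw [hsplit] at hsum
      exact WithTop.add_right_cancel ENNReal.ofReal_ne_top hsum
    rw [hinter, ENNReal.ofReal_mul hε.le, mul_comm (ENNReal.ofReal ε), ← mul_assoc,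
      ENNReal.inv_mul_cancel _ ENNReal.ofReal_ne_top, one_mul]
    exact (ENNReal.ofReal_pos.2 hK).ne'
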